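/- If X is connected and f is a subharmonic function on X attaining its supremum at an interior point x₀ ∈ X \ ∂X, then f is constant on X. -/

import Mathlib

def Nset {X : Type*} (w : X → X → ℝ) (a : X) : ℕ → Set X
  | 0 => {a}
  | k + 1 => {y | ∃ x ∈ Nset w a k, 0 < w x y}

/-- on a connected graph, a subharmonic function attaining its
supremum at an interior point is constant. -/
theorem stmt_5 {X : Type*} [Countable X] (w : X → X → ℝ)
    (hnn : ∀ x y, 0 ≤ w x y) (hfin : ∀ x, (Function.support (w x)).Finite)
    (hrow : ∀ x, ∑ᶠ y, w x y = 1)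
    (hconn : ∀ a : X, w a a ≠ 1 → (⋃ k, Nset w a k) = Set.univ)
    (f : X → ℝ) (hsub : ∀ x, f x ≤ ∑ᶠ ζ, w x ζ * f ζ)
    (x₀ : X) (hx₀ : w x₀ x₀ ≠ 1) (hmax : ∀ x, f x ≤ f x₀) :
    ∀ x y : X, f x = f y := by
  -- key step: if f x = f x₀ and w x y > 0 then f y = f x₀
  have key : ∀ x : X, f x = f x₀ → ∀ y : X, 0 < w x y → f y = f x₀ := by
    intro x hx y hwy
    set g : X → ℝ := fun ζ => w x ζ * (f x₀ - f ζ) with hg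
    have hgnn : ∀ ζ, 0 ≤ g ζ := fun ζ =>
      mul_nonneg (hnn x ζ) (sub_nonneg.2 (hmax ζ))
    have hgsupp : Function.support g ⊆ Function.support (w x) := by
      intro ζ hζ h0
      apply hζ
      show w x ζ * (f x₀ - f ζ) = 0
      rw [h0, zero_mul]
    have hgfin : (Function.support g).Finite := (hfin x).subset hgsupp
    -- the sum of g is ≤ 0
    have hsum : ∑ᶠ ζ, g ζ ≤ 0 := by
      have h1 : ∑ᶠ ζ, g ζ = ∑ᶠ ζ, w x ζ * f x₀ - ∑ᶠ ζ, w x ζ * f ζ := by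
        rw [← finsum_sub_distrib]
        · exact finsum_congr fun ζ => by ring
        · exact (hfin x).subset fun ζ hζ h0 => hζ (by show _ * _ = (0:ℝ); rw [h0, zero_mul])
        · exact (hfin x).subset fun ζ hζ h0 => hζ (by show _ * _ = (0:ℝ); rw [h0, zero_mul])
      have h2 : ∑ᶠ ζ, w x ζ * f x₀ = f x₀ := by
        rw [← finsum_mul _ _, hrow, one_mul]
      rw [h1, h2]
      have := hsub x
      linarith [hsub x, hx]
    have hy := single_le_finsum y hgfin hgnn
    have : g y = 0 := le_antisymm (hy.trans hsum) (hgnn y)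
    have : f x₀ - f y = 0 := by
      rcases mul_eq_zero.1 this with h | h
      · exact absurd h (ne_of_gt hwy)
      · exact h
    linarith
  -- by induction every point of Nset w x₀ k has value f x₀
  have hN : ∀ k : ℕ, ∀ z ∈ Nset w x₀ k, f z = f x₀ := by
    intro k
    induction k with
    | zero => intro z hz; simp only [Nset, Set.mem_singleton_iff] at hz; rw [hz]
    | succ k ih =>
      intro z hz
      obtain ⟨x, hxk, hwx⟩ := hz
      exact key x (ih x hxk) z hwx
  have hall : ∀ z : X, f z = f x₀ := by
    intro z
    have : z ∈ ⋃ k, Nset w x₀ k := by rw [hconn x₀ hx₀]; trivial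
    obtain ⟨k, hk⟩ := Set.mem_iUnion.1 this
    exact hN k z hk
  intro x y; rw [hall x, hall y]
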